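/- arXiv:hep-th/9309118 — 2 statements merged into one kernel-verified Lean document; each statement's English description precedes it below -/
import Mathlib

section
/- (Lemma recA.) For all integers 1 ≤ n < l and λ ≥ 1, the recursion A^{(nl)}_λ(x|a₁,…,a_{n−1},a|b₁,…,b_{l−1},aτ²) = (x − aτ) · ( A^{(n−1,l−1)}_λ(x|a₁,…,a_{n−1}|b₁,…,b_{l−1}) − aτ³ · A^{(n−1,l−1)}_{λ−1}(x|a₁,…,a_{n−1}|b₁,…,b_{l−1}) ) holds as an identity of polynomials. -/
open Finset Function

noncomputable section

/-- The infinite product `(z;p)_∞ = ∏_{k≥0} (1 - z p^k)`. -/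
def pochInf (z p : ℂ) : ℂ := ∏' k : ℕ, (1 - z * p ^ k)

/-- `ψ(z) = 1/((zq;q⁴)_∞ (z⁻¹q;q⁴)_∞)`. -/
def psiF (q z : ℂ) : ℂ := 1 / (pochInf (z * q) (q ^ 4) * pochInf (z⁻¹ * q) (q ^ 4))

/-- The kernel `Ψ(x₁,…,xₙ|z₁,…,z_N) = ϑ(x|z)·∏_{μ,j} ψ(x_μ/z_j)`. -/
def kerPsi (q : ℂ) {n N : ℕ} (θ : (Fin n → ℂ) → (Fin N → ℂ) → ℂ)
    (x : Fin n → ℂ) (z : Fin N → ℂ) : ℂ :=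
  θ x z * ∏ μ : Fin n, ∏ j : Fin N, psiF q (x μ / z j)

/-- One-variable kernel `Ψ(x|z₁,…,z_N) = ϑ(x|z)·∏_j ψ(x/z_j)`. -/
def kerPsi1 (q : ℂ) {N : ℕ} (θ : ℂ → (Fin N → ℂ) → ℂ) (x : ℂ) (z : Fin N → ℂ) : ℂ :=
  θ x z * ∏ j : Fin N, psiF q (x / z j)

/-- Elementary symmetric polynomial `σ_κ(a₁,…,a_m)`. -/
def esym {m : ℕ} (a : Fin m → ℂ) (κ : ℕ) : ℂ :=
  ∑ s ∈ Finset.powersetCard κ (Finset.univ : Finset (Fin m)), ∏ i ∈ s, a i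

/-- Complete homogeneous symmetric polynomial `σ̃_κ(a₁,…,a_m)`. -/
def hsym {m : ℕ} (a : Fin m → ℂ) (κ : ℕ) : ℂ :=
  ∑ μ ∈ (Finset.univ : Finset (Fin m)).sym κ, (Multiset.map a (μ : Multiset (Fin m))).prod

/-- `h^{(m)}(x|z) = x⁻¹(∏_j (x - z_jτ) - τ^{2m} ∏_j (x - z_jτ⁻¹))` as a polynomial in `x`
(the bracket vanishes at `x = 0`, so division is exact). -/
def hN (τ : ℂ) {m : ℕ} (z : Fin m → ℂ) : Polynomial ℂ :=
  ((∏ j : Fin m, (Polynomial.X - Polynomial.C (z j * τ)))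
      - Polynomial.C (τ ^ (2 * m)) * ∏ j : Fin m, (Polynomial.X - Polynomial.C (z j * τ⁻¹)))
    /ₘ Polynomial.X

/-- `φ^{(nl)}_{λκ}(a|b)`. -/
def phiP (τ : ℂ) {n l : ℕ} (lam κ : ℕ) (a : Fin n → ℂ) (b : Fin l → ℂ) : ℂ :=
  esym b κ - ∑ β ∈ Finset.Icc lam κ, ∑ α ∈ Finset.Icc lam β,
    (-1 : ℂ) ^ (β - α) * τ ^ (2 * β) * esym b (κ - β) * esym a α * hsym a (β - α)

/-- `f^{(nl)}_λ(x|a|b) = Σ_{κ=0}^{l−n+λ−2} (1 − τ^{2(l−n+λ−1−κ)})(−τ)^κ φ^{(nl)}_{λκ}(a|b)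
x^{l−n+λ−2−κ}` (empty sum if `l−n+λ−2 < 0`). -/
def fP (τ : ℂ) {n l : ℕ} (lam : ℕ) (x : ℂ) (a : Fin n → ℂ) (b : Fin l → ℂ) : ℂ :=
  ∑ κ ∈ Finset.range ((l : ℤ) - n + lam - 1).toNat,
    (1 - τ ^ (2 * (((l : ℤ) - n + lam - 1).toNat - κ))) * (-τ) ^ κ * phiP τ lam κ a b
      * x ^ (((l : ℤ) - n + lam - 1).toNat - 1 - κ)

/-- `g^{(n)}_λ(x|a) = Σ_{κ=0}^{λ−2} (1 − τ^{2(λ−1−κ)})(−τ)^κ σ_κ(a) x^{λ−2−κ}`. -/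
def gP (τ : ℂ) {n : ℕ} (lam : ℕ) (x : ℂ) (a : Fin n → ℂ) : ℂ :=
  ∑ κ ∈ Finset.range (lam - 1),
    (1 - τ ^ (2 * (lam - 1 - κ))) * (-τ) ^ κ * esym a κ * x ^ (lam - 2 - κ)

/-- `A^{(nl)}_λ(x|a|b)`. -/
def AP (τ : ℂ) {n l : ℕ} (lam : ℕ) (x : ℂ) (a : Fin n → ℂ) (b : Fin l → ℂ) : ℂ :=
  (∏ j : Fin n, (x - a j * τ)) * fP τ lam x a b
    + τ ^ (2 * (l - n + lam - 1)) * (∏ i : Fin l, (x - b i * τ⁻¹)) * gP τ lam x a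

/-- `Δ^{(nl)}(x₁,…,xₙ|a|b) = det(A^{(nl)}_λ(x_μ|a|b))_{1 ≤ λ,μ ≤ n}`. -/
def DeltaP (τ : ℂ) {n l : ℕ} (x : Fin n → ℂ) (a : Fin n → ℂ) (b : Fin l → ℂ) : ℂ :=
  Matrix.det (Matrix.of fun lam μ : Fin n => AP τ ((lam : ℕ) + 1) (x μ) a b)

/-- The explicit `Δ(x|z₁|b₁,…,b_m)` of the case `n = 1` (here `m = N − 1`):
`(x−z₁τ)·Σ_{κ=0}^{N−3}(1−τ^{2(N−2−κ)})(−τ)^κ x^{N−3−κ} Σ_{λ=0}^{κ}(−z₁τ²)^λ σ_{κ−λ}(b)`. -/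
def Delta1 (τ : ℂ) {m : ℕ} (x z1 : ℂ) (b : Fin m → ℂ) : ℂ :=
  (x - z1 * τ) * ∑ κ ∈ Finset.range (m - 1),
    (1 - τ ^ (2 * (m - 1 - κ))) * (-τ) ^ κ * x ^ (m - 2 - κ) *
      ∑ lam ∈ Finset.range (κ + 1), (-(z1 * τ ^ 2)) ^ lam * esym b (κ - lam)

/-- Iterated contour integral over `n` copies of the anticlockwise circle `|x| = ρ`. -/
def multiCircle : (n : ℕ) → ((Fin n → ℂ) → ℂ) → ℝ → ℂ
  | 0, f, _ => f (fun i => i.elim0)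
  | n + 1, f, ρ => ∮ t in C(0, ρ), multiCircle n (fun x => f (Fin.cons t x)) ρ

/-- `H(a|b) = ∮⋯∮ F(x|a,b) Ψ(x|a,b) dx₁⋯dxₙ` with
`F = Δ^{(nl)}(x|a|b)/∏_{j,i}(b_i − a_jτ²)`. -/
def Hfun (q τ : ℂ) {n l : ℕ} (θ : (Fin n → ℂ) → (Fin (n + l) → ℂ) → ℂ)
    (a : Fin n → ℂ) (b : Fin l → ℂ) (ρ : ℝ) : ℂ :=
  multiCircle n (fun x =>
    (DeltaP τ x a b / ∏ j : Fin n, ∏ i : Fin l, (b i - a j * τ ^ 2)) *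
      kerPsi q θ x (Fin.append a b)) ρ

/-- The radius `ρ` separates the poles: `max_i |w_i q| < ρ < min_i |w_i q⁻¹|`
for the tuple `w = (a, b)`. -/
def admissible (q : ℂ) {n l : ℕ} (a : Fin n → ℂ) (b : Fin l → ℂ) (ρ : ℝ) : Prop :=
  (∀ j, ‖a j * q‖ < ρ) ∧ (∀ j, ρ < ‖a j * q⁻¹‖) ∧
  (∀ i, ‖b i * q‖ < ρ) ∧ (∀ i, ρ < ‖b i * q⁻¹‖)

/-- The denominator of `F` does not vanish: `w_i − w_jτ² ≠ 0` for `1 ≤ j ≤ n < i ≤ N`. -/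
def regularF (τ : ℂ) {n l : ℕ} (a : Fin n → ℂ) (b : Fin l → ℂ) : Prop :=
  ∀ (j : Fin n) (i : Fin l), b i - a j * τ ^ 2 ≠ 0

end


noncomputable section recAproof

lemma esym_zero {m : ℕ} (a : Fin m → ℂ) : esym a 0 = 1 := by
  simp [esym]

lemma hsym_zero {m : ℕ} (a : Fin m → ℂ) : hsym a 0 = 1 := by
  rw [hsym, Finset.sym_zero, Finset.sum_singleton]
  rfl

lemma castSuccEmb_snoc {m : ℕ} (a : Fin m → ℂ) (a0 : ℂ) (i : Fin m) :
    (Fin.snoc a a0 : Fin (m+1) → ℂ) (Fin.castSuccEmb i) = a i := by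
  show (Fin.snoc a a0 : Fin (m+1) → ℂ) i.castSucc = a i
  simp

lemma mapEmb_eq {m : ℕ} (s : Finset (Fin m)) :
    (Finset.mapEmbedding (Fin.castSuccEmb (n := m))).toEmbedding s = s.map Fin.castSuccEmb := rfl

lemma last_not_mem_map {m : ℕ} (s : Finset (Fin m)) :
    Fin.last m ∉ s.map Fin.castSuccEmb := by
  rw [Finset.mem_map]
  rintro ⟨i, _, hi⟩
  exact (Fin.castSucc_lt_last i).ne hi

lemma esym_snoc {m : ℕ} (a : Fin m → ℂ) (a0 : ℂ) (κ : ℕ) :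
    esym (Fin.snoc a a0) (κ + 1) = esym a (κ + 1) + a0 * esym a κ := by
  classical
  unfold esym
  rw [Fin.univ_castSuccEmb, Finset.cons_eq_insert,
    Finset.powersetCard_succ_insert (last_not_mem_map _)]
  rw [Finset.sum_union]
  · congr 1
    · rw [Finset.powersetCard_map, Finset.sum_map]
      apply Finset.sum_congr rfl
      intro s _
      rw [mapEmb_eq]
      rw [Finset.prod_map]
      exact Finset.prod_congr rfl fun i _ => castSuccEmb_snoc a a0 i
    · rw [Finset.sum_image, Finset.mul_sum]
      · rw [Finset.powersetCard_map, Finset.sum_map]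
        apply Finset.sum_congr rfl
        intro s hs
        rw [mapEmb_eq]
        rw [Finset.prod_insert (last_not_mem_map s),
          Fin.snoc_last, Finset.prod_map]
        congr 1
        exact Finset.prod_congr rfl fun i _ => castSuccEmb_snoc a a0 i
      · intro s hs t ht hst
        rw [Finset.mem_coe, Finset.mem_powersetCard] at hs ht
        have hs' : Fin.last m ∉ s := fun h => last_not_mem_map _ (hs.1 h)
        have ht' : Fin.last m ∉ t := fun h => last_not_mem_map _ (ht.1 h)
        have := congrArg (Finset.erase · (Fin.last m)) hst
        simpa [Finset.erase_insert hs', Finset.erase_insert ht'] using this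
  · rw [Finset.disjoint_right]
    intro s hs hs'
    rw [Finset.mem_image] at hs
    obtain ⟨t, ht, rfl⟩ := hs
    rw [Finset.mem_powersetCard] at hs'
    exact last_not_mem_map _ (hs'.1 (Finset.mem_insert_self _ _))

lemma hsym_eq_sum {m : ℕ} (a : Fin m → ℂ) (κ : ℕ) :
    hsym a κ = ∑ μ : Sym (Fin m) κ, (Multiset.map a (μ : Multiset (Fin m))).prod := by
  rw [hsym, Finset.sym_univ]

lemma hsym_snoc_eq_opt {m : ℕ} (a : Fin m → ℂ) (a0 : ℂ) (κ : ℕ) :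
    hsym (Fin.snoc a a0) κ
      = ∑ ν : Sym (Option (Fin m)) κ,
          (Multiset.map (fun o => Option.elim o a0 a) (ν : Multiset (Option (Fin m)))).prod := by
  rw [hsym_eq_sum, ← Equiv.sum_comp (Sym.equivCongr (finSuccEquivLast (n := m)))]
  apply Finset.sum_congr rfl
  intro μ _
  have he : (Sym.equivCongr (finSuccEquivLast (n := m))) μ = Sym.map finSuccEquivLast μ := rfl
  rw [he, Sym.coe_map, Multiset.map_map]
  apply congrArg
  apply Multiset.map_congr rfl
  intro i _
  induction i using Fin.lastCases with
  | last => simp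
  | cast j => simp

lemma opt_sum_succ {m : ℕ} (g : Option (Fin m) → ℂ) (κ : ℕ) :
    ∑ ν : Sym (Option (Fin m)) (κ + 1), (Multiset.map g (ν : Multiset _)).prod
      = (∑ s : Sym (Fin m) (κ + 1), (Multiset.map (fun i => g (some i)) (s : Multiset _)).prod)
        + g none * ∑ ν : Sym (Option (Fin m)) κ, (Multiset.map g (ν : Multiset _)).prod := by
  classical
  rw [← Equiv.sum_comp (symOptionSuccEquiv (α := Fin m)).symm, Fintype.sum_sum_type]
  have h1 : ∑ s : Sym (Option (Fin m)) κ,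
      (Multiset.map g ((symOptionSuccEquiv.symm (Sum.inl s) : Sym (Option (Fin m)) (κ+1)) : Multiset _)).prod
      = g none * ∑ ν : Sym (Option (Fin m)) κ, (Multiset.map g (ν : Multiset _)).prod := by
    rw [Finset.mul_sum]
    apply Finset.sum_congr rfl
    intro s _
    have hd : (symOptionSuccEquiv.symm (Sum.inl s) : Sym (Option (Fin m)) (κ+1)) = none ::ₛ s := rfl
    rw [hd, Sym.coe_cons, Multiset.map_cons, Multiset.prod_cons]
  have h2 : ∑ s : Sym (Fin m) (κ + 1),
      (Multiset.map g ((symOptionSuccEquiv.symm (Sum.inr s) : Sym (Option (Fin m)) (κ+1)) : Multiset _)).prod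
      = ∑ s : Sym (Fin m) (κ + 1), (Multiset.map (fun i => g (some i)) (s : Multiset _)).prod := by
    apply Finset.sum_congr rfl
    intro s _
    have hd : (symOptionSuccEquiv.symm (Sum.inr s) : Sym (Option (Fin m)) (κ+1))
        = Sym.map Embedding.some s := rfl
    rw [hd, Sym.coe_map, Multiset.map_map]
    rfl
  rw [h1, h2, add_comm]

lemma hsym_snoc {m : ℕ} (a : Fin m → ℂ) (a0 : ℂ) (κ : ℕ) :
    hsym (Fin.snoc a a0) (κ + 1) = hsym a (κ + 1) + a0 * hsym (Fin.snoc a a0) κ := by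
  rw [hsym_snoc_eq_opt, opt_sum_succ, hsym_eq_sum, hsym_snoc_eq_opt]
  rfl

def Usum {m : ℕ} (a : Fin m → ℂ) (L β : ℕ) : ℂ :=
  ∑ α ∈ Finset.Icc L β, (-1 : ℂ) ^ (β - α) * esym a α * hsym a (β - α)

lemma Usum_eq_zero {m : ℕ} (a : Fin m → ℂ) {L β : ℕ} (h : β < L) : Usum a L β = 0 := by
  rw [Usum, Finset.Icc_eq_empty (by omega), Finset.sum_empty]

lemma sum_Icc_shift (f : ℕ → ℂ) (L B : ℕ) :
    ∑ α ∈ Finset.Icc (L + 1) (B + 1), f α = ∑ α ∈ Finset.Icc L B, f (α + 1) := by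
  rw [← Finset.map_add_right_Icc L B 1, Finset.sum_map]
  rfl

lemma Usum_succ {m : ℕ} (a : Fin m → ℂ) (L B : ℕ) :
    Usum a (L + 1) (B + 1)
      = ∑ α ∈ Finset.Icc L B, (-1 : ℂ) ^ (B - α) * esym a (α + 1) * hsym a (B - α) := by
  rw [Usum, sum_Icc_shift]
  apply Finset.sum_congr rfl
  intro α _
  have h : B + 1 - (α + 1) = B - α := by omega
  rw [h]

lemma claimB {m : ℕ} (a : Fin m → ℂ) (a0 : ℂ) (lam β : ℕ) :
    Usum (Fin.snoc a a0) (lam + 1) (β + 1) + a0 * Usum (Fin.snoc a a0) (lam + 1) β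
      = Usum a (lam + 1) (β + 1) + a0 * Usum a lam β := by
  cases β with
  | zero =>
    rw [Usum_eq_zero (Fin.snoc a a0) (show (0:ℕ) < lam + 1 by omega)]
    cases lam with
    | zero =>
      rw [Usum_succ (Fin.snoc a a0) 0 0, Usum_succ a 0 0, Usum]
      simp only [Finset.Icc_self, Finset.sum_singleton, Nat.sub_self, pow_zero, one_mul,
        hsym_zero, esym_zero, mul_one]
      rw [esym_snoc a a0 0, esym_zero]
      ring
    | succ s =>
      rw [Usum_eq_zero (Fin.snoc a a0) (show (1:ℕ) < s + 1 + 1 by omega),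
        Usum_eq_zero (a := a) (show (1:ℕ) < s + 1 + 1 by omega),
        Usum_eq_zero (a := a) (show (0:ℕ) < s + 1 by omega)]
  | succ b =>
    by_cases hl : lam ≤ b + 1
    · rw [Usum_succ (Fin.snoc a a0) lam (b + 1), Usum_succ (Fin.snoc a a0) lam b,
        Usum_succ a lam (b + 1), Usum]
      rw [Finset.sum_Icc_succ_top hl, Finset.sum_Icc_succ_top hl, Finset.sum_Icc_succ_top hl]
      have htop : ∀ (c : Fin (m+1) → ℂ) (d : Fin m → ℂ), True := fun _ _ => trivial
      -- tops
      simp only [Nat.sub_self, pow_zero, one_mul, hsym_zero]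
      have hS : (∑ α ∈ Finset.Icc lam b, (-1:ℂ)^(b+1-α) * esym (Fin.snoc a a0) (α+1) * hsym (Fin.snoc a a0) (b+1-α))
          + a0 * (∑ α ∈ Finset.Icc lam b, (-1:ℂ)^(b-α) * esym (Fin.snoc a a0) (α+1) * hsym (Fin.snoc a a0) (b-α))
          = (∑ α ∈ Finset.Icc lam b, (-1:ℂ)^(b+1-α) * esym a (α+1) * hsym a (b+1-α))
            + a0 * (∑ α ∈ Finset.Icc lam b, (-1:ℂ)^(b+1-α) * esym a α * hsym a (b+1-α)) := by
        rw [Finset.mul_sum, Finset.mul_sum, ← Finset.sum_add_distrib, ← Finset.sum_add_distrib]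
        apply Finset.sum_congr rfl
        intro α hα
        have hαb : α ≤ b := (Finset.mem_Icc.mp hα).2
        have h1 : b + 1 - α = (b - α) + 1 := by omega
        rw [h1, hsym_snoc a a0 (b - α), esym_snoc a a0 α, pow_succ]
        ring
      have htop2 : esym (Fin.snoc a a0) (b + 1 + 1) = esym a (b + 1 + 1) + a0 * esym a (b + 1) :=
        esym_snoc a a0 (b + 1)
      linear_combination hS + htop2
    · have h1 : b + 1 < lam + 1 := by omega
      have h2 : b + 1 + 1 ≤ lam + 1 := by omega
      rw [Usum_eq_zero _ (by omega : (b+1:ℕ) < lam + 1),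
          Usum_eq_zero _ (by omega : (b+1+1:ℕ) < lam + 1),
          Usum_eq_zero (a := a) (by omega : (b+1+1:ℕ) < lam + 1),
          Usum_eq_zero (a := a) (by omega : (b+1:ℕ) < lam)]

lemma Tsum_range (τ : ℂ) {m k : ℕ} (a : Fin m → ℂ) (b : Fin k → ℂ) (L K : ℕ) :
    ∑ β ∈ Finset.Icc L K, τ ^ (2 * β) * esym b (K - β) * Usum a L β
      = ∑ β ∈ Finset.range (K + 1), τ ^ (2 * β) * esym b (K - β) * Usum a L β := by
  apply Finset.sum_subset
  · intro x hx; rw [Finset.mem_Icc] at hx; rw [Finset.mem_range]; omega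
  · intro x hx hx'
    rw [Finset.mem_range] at hx; rw [Finset.mem_Icc] at hx'
    rw [Usum_eq_zero a (by omega)]
    ring

lemma phiP_eq (τ : ℂ) {n l : ℕ} (L K : ℕ) (a : Fin n → ℂ) (b : Fin l → ℂ) :
    phiP τ L K a b
      = esym b K - ∑ β ∈ Finset.range (K + 1), τ ^ (2 * β) * esym b (K - β) * Usum a L β := by
  rw [phiP, ← Tsum_range]
  congr 1
  apply Finset.sum_congr rfl
  intro β _
  rw [Usum, Finset.mul_sum]
  apply Finset.sum_congr rfl
  intro α _
  ring

lemma claimT (τ : ℂ) {m k : ℕ} (a : Fin m → ℂ) (a0 : ℂ) (b : Fin k → ℂ) (lam κ : ℕ) :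
    ∑ β ∈ Finset.range (κ + 2),
        τ ^ (2 * β) * esym (Fin.snoc b (a0 * τ ^ 2)) (κ + 1 - β) * Usum (Fin.snoc a a0) (lam + 1) β
      = (∑ β ∈ Finset.range (κ + 2), τ ^ (2 * β) * esym b (κ + 1 - β) * Usum a (lam + 1) β)
        + a0 * τ ^ 2 * ∑ β ∈ Finset.range (κ + 1), τ ^ (2 * β) * esym b (κ - β) * Usum a lam β := by
  have key : ∀ β, Usum (Fin.snoc a a0) (lam + 1) (β + 1)
      = Usum a (lam + 1) (β + 1) + a0 * Usum a lam β - a0 * Usum (Fin.snoc a a0) (lam + 1) β :=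
    fun β => by linear_combination claimB a a0 lam β
  rw [Finset.sum_range_succ' (fun β =>
    τ ^ (2 * β) * esym (Fin.snoc b (a0 * τ ^ 2)) (κ + 1 - β) * Usum (Fin.snoc a a0) (lam + 1) β) (κ + 1)]
  rw [Finset.sum_range_succ' (fun β =>
    τ ^ (2 * β) * esym b (κ + 1 - β) * Usum a (lam + 1) β) (κ + 1)]
  simp only [Usum_eq_zero (Fin.snoc a a0) (show (0:ℕ) < lam + 1 by omega),
    Usum_eq_zero (a := a) (show (0:ℕ) < lam + 1 by omega), mul_zero, add_zero]
  rw [← sub_eq_zero]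
  have hcomb : (∑ β ∈ Finset.range (κ + 1),
        τ ^ (2 * (β + 1)) * esym (Fin.snoc b (a0 * τ ^ 2)) (κ + 1 - (β + 1)) * Usum (Fin.snoc a a0) (lam + 1) (β + 1))
      - ((∑ β ∈ Finset.range (κ + 1), τ ^ (2 * (β + 1)) * esym b (κ + 1 - (β + 1)) * Usum a (lam + 1) (β + 1))
        + a0 * τ ^ 2 * ∑ β ∈ Finset.range (κ + 1), τ ^ (2 * β) * esym b (κ - β) * Usum a lam β)
      = ∑ β ∈ Finset.range (κ + 1),
          (τ ^ (2 * (β + 1)) * esym (Fin.snoc b (a0 * τ ^ 2)) (κ + 1 - (β + 1)) * Usum (Fin.snoc a a0) (lam + 1) (β + 1)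
            - τ ^ (2 * (β + 1)) * esym b (κ + 1 - (β + 1)) * Usum a (lam + 1) (β + 1)
            - a0 * τ ^ 2 * (τ ^ (2 * β) * esym b (κ - β) * Usum a lam β)) := by
    rw [Finset.sum_sub_distrib, Finset.sum_sub_distrib, Finset.mul_sum]
    ring
  rw [hcomb]
  have tele := Finset.sum_range_sub
    (fun β => a0 * (τ ^ (2 * β + 2) * esym b (κ - β) * Usum (Fin.snoc a a0) (lam + 1) β)) κ
  have hmid : ∀ β ∈ Finset.range κ,
      (τ ^ (2 * (β + 1)) * esym (Fin.snoc b (a0 * τ ^ 2)) (κ + 1 - (β + 1)) * Usum (Fin.snoc a a0) (lam + 1) (β + 1)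
        - τ ^ (2 * (β + 1)) * esym b (κ + 1 - (β + 1)) * Usum a (lam + 1) (β + 1)
        - a0 * τ ^ 2 * (τ ^ (2 * β) * esym b (κ - β) * Usum a lam β))
      = (fun β => a0 * (τ ^ (2 * β + 2) * esym b (κ - β) * Usum (Fin.snoc a a0) (lam + 1) β)) (β + 1)
        - (fun β => a0 * (τ ^ (2 * β + 2) * esym b (κ - β) * Usum (Fin.snoc a a0) (lam + 1) β)) β := by
    intro β hβ
    rw [Finset.mem_range] at hβ
    simp only []
    obtain ⟨γ, hγ⟩ : ∃ γ, κ - β = γ + 1 := ⟨κ - β - 1, by omega⟩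
    rw [show κ + 1 - (β + 1) = γ + 1 by omega, show κ - (β + 1) = γ by omega, hγ,
      esym_snoc b (a0 * τ ^ 2) γ, key β]
    ring
  rw [Finset.sum_range_succ, Finset.sum_congr rfl hmid, tele]
  simp only [Nat.sub_self, pow_zero, esym_zero, mul_one,
    Usum_eq_zero (Fin.snoc a a0) (show (0:ℕ) < lam + 1 by omega), mul_zero, sub_zero]
  rw [key κ]
  ring

lemma phi_succ (τ : ℂ) {m k : ℕ} (a : Fin m → ℂ) (a0 : ℂ) (b : Fin k → ℂ) (lam κ : ℕ) :
    phiP τ (lam + 1) (κ + 1) (Fin.snoc a a0) (Fin.snoc b (a0 * τ ^ 2))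
      = phiP τ (lam + 1) (κ + 1) a b + a0 * τ ^ 2 * phiP τ lam κ a b := by
  rw [phiP_eq, phiP_eq, phiP_eq]
  have hE : esym (Fin.snoc b (a0 * τ ^ 2)) (κ + 1) = esym b (κ + 1) + a0 * τ ^ 2 * esym b κ :=
    esym_snoc b (a0 * τ ^ 2) κ
  have hT := claimT τ a a0 b lam κ
  linear_combination hE - hT

lemma phi_zero (τ : ℂ) {n l : ℕ} (lam : ℕ) (a : Fin n → ℂ) (b : Fin l → ℂ) :
    phiP τ (lam + 1) 0 a b = 1 := by
  rw [phiP, Finset.Icc_eq_empty (by omega), Finset.sum_empty, esym_zero, sub_zero]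

lemma gP_snoc (τ x : ℂ) {m : ℕ} (a : Fin m → ℂ) (a0 : ℂ) (L : ℕ) :
    gP τ (L + 1) x (Fin.snoc a a0) = gP τ (L + 1) x a - a0 * τ * gP τ L x a := by
  cases L with
  | zero => simp [gP]
  | succ t =>
    unfold gP
    simp only [show t + 1 + 1 - 1 = t + 1 from rfl, show t + 1 - 1 = t from rfl]
    rw [Finset.sum_range_succ' (fun κ =>
      (1 - τ ^ (2 * (t + 1 - κ))) * (-τ) ^ κ * esym (Fin.snoc a a0) κ * x ^ (t + 1 + 1 - 2 - κ)) t]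
    rw [Finset.sum_range_succ' (fun κ =>
      (1 - τ ^ (2 * (t + 1 - κ))) * (-τ) ^ κ * esym a κ * x ^ (t + 1 + 1 - 2 - κ)) t]
    rw [← sub_eq_zero]
    simp only [esym_zero]
    rw [Finset.mul_sum]
    have hmid : ∀ κ ∈ Finset.range t,
        ((1 - τ ^ (2 * (t + 1 - (κ + 1)))) * (-τ) ^ (κ + 1) * esym (Fin.snoc a a0) (κ + 1)
            * x ^ (t + 1 + 1 - 2 - (κ + 1)))
          - ((1 - τ ^ (2 * (t + 1 - (κ + 1)))) * (-τ) ^ (κ + 1) * esym a (κ + 1)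
            * x ^ (t + 1 + 1 - 2 - (κ + 1))
            - a0 * τ * ((1 - τ ^ (2 * (t - κ))) * (-τ) ^ κ * esym a κ * x ^ (t + 1 - 2 - κ))) = 0 := by
      intro κ hκ
      rw [Finset.mem_range] at hκ
      rw [show t + 1 - (κ + 1) = t - κ by omega, show t + 1 + 1 - 2 - (κ + 1) = t - 1 - κ by omega,
        show t + 1 - 2 - κ = t - 1 - κ by omega, esym_snoc a a0 κ, pow_succ]
      ring
    calc (∑ κ ∈ Finset.range t, ((1 - τ ^ (2 * (t + 1 - (κ + 1)))) * (-τ) ^ (κ + 1)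
              * esym (Fin.snoc a a0) (κ + 1) * x ^ (t + 1 + 1 - 2 - (κ + 1)))
            + (1 - τ ^ (2 * (t + 1 - 0))) * (-τ) ^ 0 * (1:ℂ) * x ^ (t + 1 + 1 - 2 - 0))
          - ((∑ κ ∈ Finset.range t, ((1 - τ ^ (2 * (t + 1 - (κ + 1)))) * (-τ) ^ (κ + 1)
              * esym a (κ + 1) * x ^ (t + 1 + 1 - 2 - (κ + 1)))
            + (1 - τ ^ (2 * (t + 1 - 0))) * (-τ) ^ 0 * (1:ℂ) * x ^ (t + 1 + 1 - 2 - 0))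
            - ∑ κ ∈ Finset.range t, a0 * τ * ((1 - τ ^ (2 * (t - κ))) * (-τ) ^ κ * esym a κ
              * x ^ (t + 1 - 2 - κ)))
        = ∑ κ ∈ Finset.range t, (((1 - τ ^ (2 * (t + 1 - (κ + 1)))) * (-τ) ^ (κ + 1)
              * esym (Fin.snoc a a0) (κ + 1) * x ^ (t + 1 + 1 - 2 - (κ + 1)))
          - ((1 - τ ^ (2 * (t + 1 - (κ + 1)))) * (-τ) ^ (κ + 1) * esym a (κ + 1)
              * x ^ (t + 1 + 1 - 2 - (κ + 1))
            - a0 * τ * ((1 - τ ^ (2 * (t - κ))) * (-τ) ^ κ * esym a κ * x ^ (t + 1 - 2 - κ)))) := by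
          rw [Finset.sum_sub_distrib, Finset.sum_sub_distrib]; ring
      _ = 0 := by rw [Finset.sum_congr rfl hmid]; simp

lemma fP_snoc (τ x : ℂ) {m : ℕ} (a : Fin m → ℂ) (a0 : ℂ) {k : ℕ} (b : Fin k → ℂ) (e L : ℕ)
    (hk : k = m + 1 + e) :
    fP τ (L + 1) x (Fin.snoc a a0) (Fin.snoc b (a0 * τ ^ 2))
      = fP τ (L + 1) x a b - a0 * τ ^ 3 * fP τ L x a b := by
  subst hk
  unfold fP
  have h1 : (((m + 1 + e + 1 : ℕ) : ℤ) - ((m + 1 : ℕ) : ℤ) + ((L + 1 : ℕ) : ℤ) - 1).toNat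
      = e + L + 1 := by push_cast; omega
  have h2 : (((m + 1 + e : ℕ) : ℤ) - ((m : ℕ) : ℤ) + ((L + 1 : ℕ) : ℤ) - 1).toNat
      = e + L + 1 := by push_cast; omega
  have h3 : (((m + 1 + e : ℕ) : ℤ) - ((m : ℕ) : ℤ) + ((L : ℕ) : ℤ) - 1).toNat = e + L := by
    push_cast; omega
  rw [h1, h2, h3]
  rw [Finset.sum_range_succ' (fun κ =>
    (1 - τ ^ (2 * (e + L + 1 - κ))) * (-τ) ^ κ
      * phiP τ (L + 1) κ (Fin.snoc a a0) (Fin.snoc b (a0 * τ ^ 2)) * x ^ (e + L + 1 - 1 - κ)) (e + L)]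
  rw [Finset.sum_range_succ' (fun κ =>
    (1 - τ ^ (2 * (e + L + 1 - κ))) * (-τ) ^ κ * phiP τ (L + 1) κ a b
      * x ^ (e + L + 1 - 1 - κ)) (e + L)]
  rw [← sub_eq_zero]
  simp only [phi_zero]
  rw [Finset.mul_sum]
  calc (∑ κ ∈ Finset.range (e + L), ((1 - τ ^ (2 * (e + L + 1 - (κ + 1)))) * (-τ) ^ (κ + 1)
            * phiP τ (L + 1) (κ + 1) (Fin.snoc a a0) (Fin.snoc b (a0 * τ ^ 2))
            * x ^ (e + L + 1 - 1 - (κ + 1)))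
          + (1 - τ ^ (2 * (e + L + 1 - 0))) * (-τ) ^ 0 * (1 : ℂ) * x ^ (e + L + 1 - 1 - 0))
        - ((∑ κ ∈ Finset.range (e + L), ((1 - τ ^ (2 * (e + L + 1 - (κ + 1)))) * (-τ) ^ (κ + 1)
            * phiP τ (L + 1) (κ + 1) a b * x ^ (e + L + 1 - 1 - (κ + 1)))
          + (1 - τ ^ (2 * (e + L + 1 - 0))) * (-τ) ^ 0 * (1 : ℂ) * x ^ (e + L + 1 - 1 - 0))
          - ∑ κ ∈ Finset.range (e + L), a0 * τ ^ 3 * ((1 - τ ^ (2 * (e + L - κ))) * (-τ) ^ κ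
            * phiP τ L κ a b * x ^ (e + L - 1 - κ)))
      = ∑ κ ∈ Finset.range (e + L), (((1 - τ ^ (2 * (e + L + 1 - (κ + 1)))) * (-τ) ^ (κ + 1)
            * phiP τ (L + 1) (κ + 1) (Fin.snoc a a0) (Fin.snoc b (a0 * τ ^ 2))
            * x ^ (e + L + 1 - 1 - (κ + 1)))
          - ((1 - τ ^ (2 * (e + L + 1 - (κ + 1)))) * (-τ) ^ (κ + 1)
            * phiP τ (L + 1) (κ + 1) a b * x ^ (e + L + 1 - 1 - (κ + 1))
            - a0 * τ ^ 3 * ((1 - τ ^ (2 * (e + L - κ))) * (-τ) ^ κ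
            * phiP τ L κ a b * x ^ (e + L - 1 - κ)))) := by
        rw [Finset.sum_sub_distrib, Finset.sum_sub_distrib]; ring
    _ = 0 := by
        have hmid : ∀ κ ∈ Finset.range (e + L), (((1 - τ ^ (2 * (e + L + 1 - (κ + 1)))) * (-τ) ^ (κ + 1)
              * phiP τ (L + 1) (κ + 1) (Fin.snoc a a0) (Fin.snoc b (a0 * τ ^ 2))
              * x ^ (e + L + 1 - 1 - (κ + 1)))
            - ((1 - τ ^ (2 * (e + L + 1 - (κ + 1)))) * (-τ) ^ (κ + 1)
              * phiP τ (L + 1) (κ + 1) a b * x ^ (e + L + 1 - 1 - (κ + 1))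
              - a0 * τ ^ 3 * ((1 - τ ^ (2 * (e + L - κ))) * (-τ) ^ κ
              * phiP τ L κ a b * x ^ (e + L - 1 - κ)))) = 0 := by
          intro κ hκ
          rw [Finset.mem_range] at hκ
          rw [show e + L + 1 - (κ + 1) = e + L - κ by omega,
            show e + L + 1 - 1 - (κ + 1) = e + L - 1 - κ by omega,
            phi_succ τ a a0 b L κ, pow_succ]
          ring
        rw [Finset.sum_congr rfl hmid]
        simp

end recAproof

/-- Lemma recA: recursion for `A^{(nl)}_λ`; here `n = m + 1`,
`l = k + 1`, `1 ≤ n < l`, `λ ≥ 1`. -/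
theorem stmt_11 (q : ℂ) (hq0 : 0 < ‖q‖) (hq1 : ‖q‖ < 1)
    (τ : ℂ) (hτ : τ = q⁻¹) (m k lam : ℕ) (hmk : m < k) (hlam : 1 ≤ lam)
    (x a0 : ℂ) (a : Fin m → ℂ) (b : Fin k → ℂ) :
    AP τ lam x (Fin.snoc a a0) (Fin.snoc b (a0 * τ ^ 2))
      = (x - a0 * τ) * (AP τ lam x a b - a0 * τ ^ 3 * AP τ (lam - 1) x a b) := by
  have hq : q ≠ 0 := by
    intro h; rw [h] at hq0; simp at hq0
  have hτ0 : τ ≠ 0 := by rw [hτ]; exact inv_ne_zero hq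
  obtain ⟨e, rfl⟩ : ∃ e, k = m + 1 + e := ⟨k - (m + 1), by omega⟩
  obtain ⟨L, rfl⟩ : ∃ L, lam = L + 1 := ⟨lam - 1, by omega⟩
  simp only [Nat.add_sub_cancel]
  unfold AP
  have hPa : (∏ j : Fin (m + 1), (x - (Fin.snoc a a0 : Fin (m + 1) → ℂ) j * τ))
      = (∏ j : Fin m, (x - a j * τ)) * (x - a0 * τ) := by
    rw [Fin.prod_univ_castSucc]
    simp
  have hPb : (∏ i : Fin (m + 1 + e + 1), (x - (Fin.snoc b (a0 * τ ^ 2) : Fin (m + 1 + e + 1) → ℂ) i * τ⁻¹))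
      = (∏ i : Fin (m + 1 + e), (x - b i * τ⁻¹)) * (x - a0 * τ) := by
    rw [Fin.prod_univ_castSucc]
    simp only [Fin.snoc_castSucc, Fin.snoc_last]
    rw [show a0 * τ ^ 2 * τ⁻¹ = a0 * τ by field_simp]
  rw [hPa, hPb, fP_snoc τ x a a0 b e L rfl, gP_snoc τ x a a0 L]
  rw [show m + 1 + e + 1 - (m + 1) + (L + 1) - 1 = e + L + 1 by omega,
    show m + 1 + e - m + (L + 1) - 1 = e + L + 1 by omega,
    show m + 1 + e - m + L - 1 = e + L by omega]
  rw [show 2 * (e + L + 1) = 2 * (e + L) + 2 by ring, pow_add]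
  ring
end

section
/- For all integers 1 ≤ n < l, the polynomial Δ^{(nl)}(x₁,…,xₙ|a₁,…,aₙ|b₁,…,b_l) is homogeneous of total degree n(l−1) + n(n−1)/2, is antisymmetric under permutations of (x₁,…,xₙ) (it changes sign under each transposition x_μ ↔ x_ν), and is invariant under all permutations of (a₁,…,aₙ) and under all permutations of (b₁,…,b_l) separately. -/
open Finset Function

section Aux
variable {τ : ℂ}

lemma esym_comp {m : ℕ} (a : Fin m → ℂ) (p : Equiv.Perm (Fin m)) (κ : ℕ) :
    esym (a ∘ p) κ = esym a κ := by
  unfold esym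
  refine Finset.sum_nbij' (fun s => s.map p.toEmbedding)
    (fun s => s.map p.symm.toEmbedding) ?_ ?_ ?_ ?_ ?_
  · intro s hs; simpa using hs
  · intro s hs; simpa using hs
  · intro s hs; simp [Finset.map_map]
  · intro s hs; simp [Finset.map_map]
  · intro s hs; rw [Finset.prod_map]; rfl

lemma hsym_comp {m : ℕ} (a : Fin m → ℂ) (p : Equiv.Perm (Fin m)) (κ : ℕ) :
    hsym (a ∘ p) κ = hsym a κ := by
  unfold hsym
  refine Finset.sum_nbij' (fun s => s.map p) (fun s => s.map p.symm) ?_ ?_ ?_ ?_ ?_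
  · intro s hs; simp [Finset.mem_sym_iff]
  · intro s hs; simp [Finset.mem_sym_iff]
  · intro s hs; simp [Sym.map_map]
  · intro s hs; simp [Sym.map_map]
  · intro s hs; rw [Sym.coe_map, Multiset.map_map]

lemma esym_smul {m : ℕ} (c : ℂ) (a : Fin m → ℂ) (κ : ℕ) :
    esym (fun i => c * a i) κ = c ^ κ * esym a κ := by
  unfold esym
  rw [Finset.mul_sum]
  refine Finset.sum_congr rfl fun s hs => ?_
  rw [Finset.prod_mul_distrib, Finset.prod_const,
    (Finset.mem_powersetCard_univ.mp hs)]

lemma hsym_smul {m : ℕ} (c : ℂ) (a : Fin m → ℂ) (κ : ℕ) :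
    hsym (fun i => c * a i) κ = c ^ κ * hsym a κ := by
  unfold hsym
  rw [Finset.mul_sum]
  refine Finset.sum_congr rfl fun s hs => ?_
  have : (Multiset.map (fun i => c * a i) (s : Multiset (Fin m))) =
      Multiset.map (fun t => c * t) (Multiset.map a (s : Multiset (Fin m))) := by
    simp [Multiset.map_map]
  rw [this, Multiset.prod_map_mul]
  simp [s.2]

lemma phiP_comp {n l : ℕ} (lam κ : ℕ) (a : Fin n → ℂ) (b : Fin l → ℂ)
    (pa : Equiv.Perm (Fin n)) (pb : Equiv.Perm (Fin l)) :
    phiP τ lam κ (a ∘ pa) (b ∘ pb) = phiP τ lam κ a b := by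
  unfold phiP
  simp [esym_comp, hsym_comp]

lemma phiP_smul {n l : ℕ} (c : ℂ) (lam κ : ℕ) (a : Fin n → ℂ) (b : Fin l → ℂ) :
    phiP τ lam κ (fun j => c * a j) (fun i => c * b i) = c ^ κ * phiP τ lam κ a b := by
  unfold phiP
  rw [esym_smul, mul_sub]
  congr 1
  rw [Finset.mul_sum]
  refine Finset.sum_congr rfl fun β hβ => ?_
  rw [Finset.mul_sum]
  refine Finset.sum_congr rfl fun α hα => ?_
  rw [esym_smul, esym_smul, hsym_smul]
  obtain ⟨h1, h2⟩ := Finset.mem_Icc.mp hβ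
  obtain ⟨h3, h4⟩ := Finset.mem_Icc.mp hα
  rw [show c ^ κ = c ^ (κ - β) * c ^ α * c ^ (β - α) by
    rw [← pow_add, ← pow_add]; congr 1; omega]
  ring

lemma fP_comp {n l : ℕ} (lam : ℕ) (x : ℂ) (a : Fin n → ℂ) (b : Fin l → ℂ)
    (pa : Equiv.Perm (Fin n)) (pb : Equiv.Perm (Fin l)) :
    fP τ lam x (a ∘ pa) (b ∘ pb) = fP τ lam x a b := by
  unfold fP
  simp [phiP_comp]

lemma fP_smul {n l : ℕ} (c : ℂ) (lam : ℕ) (x : ℂ) (a : Fin n → ℂ) (b : Fin l → ℂ) :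
    fP τ lam (c * x) (fun j => c * a j) (fun i => c * b i)
      = c ^ (((l : ℤ) - n + lam - 1).toNat - 1) * fP τ lam x a b := by
  unfold fP
  rw [Finset.mul_sum]
  refine Finset.sum_congr rfl fun κ hκ => ?_
  have hκ' := Finset.mem_range.mp hκ
  rw [phiP_smul, mul_pow,
    show c ^ (((l : ℤ) - n + lam - 1).toNat - 1)
      = c ^ κ * c ^ (((l : ℤ) - n + lam - 1).toNat - 1 - κ) by
      rw [← pow_add]; congr 1; omega]
  ring

lemma gP_comp {n : ℕ} (lam : ℕ) (x : ℂ) (a : Fin n → ℂ) (pa : Equiv.Perm (Fin n)) :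
    gP τ lam x (a ∘ pa) = gP τ lam x a := by
  unfold gP
  simp [esym_comp]

lemma gP_smul {n : ℕ} (c : ℂ) (lam : ℕ) (x : ℂ) (a : Fin n → ℂ) :
    gP τ lam (c * x) (fun j => c * a j) = c ^ (lam - 2) * gP τ lam x a := by
  unfold gP
  rw [Finset.mul_sum]
  refine Finset.sum_congr rfl fun κ hκ => ?_
  have hκ' := Finset.mem_range.mp hκ
  rw [esym_smul, mul_pow,
    show c ^ (lam - 2) = c ^ κ * c ^ (lam - 2 - κ) by rw [← pow_add]; congr 1; omega]
  ring

lemma AP_comp {n l : ℕ} (lam : ℕ) (x : ℂ) (a : Fin n → ℂ) (b : Fin l → ℂ)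
    (pa : Equiv.Perm (Fin n)) (pb : Equiv.Perm (Fin l)) :
    AP τ lam x (a ∘ pa) (b ∘ pb) = AP τ lam x a b := by
  unfold AP
  simp only [Function.comp_apply]
  rw [fP_comp _ _ _ _ pa pb, gP_comp _ _ _ pa,
    Equiv.prod_comp pa (fun j => x - a j * τ),
    Equiv.prod_comp pb (fun i => x - b i * τ⁻¹)]

lemma AP_smul {n l : ℕ} (c : ℂ) (lam : ℕ) (hlam : 1 ≤ lam) (hnl : n < l)
    (x : ℂ) (a : Fin n → ℂ) (b : Fin l → ℂ) :
    AP τ lam (c * x) (fun j => c * a j) (fun i => c * b i)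
      = c ^ (l + lam - 2) * AP τ lam x a b := by
  unfold AP
  have h1 : (∏ j : Fin n, (c * x - c * a j * τ)) = c ^ n * ∏ j : Fin n, (x - a j * τ) := by
    rw [show (c : ℂ) ^ n = ∏ _j : Fin n, c by simp, ← Finset.prod_mul_distrib]
    exact Finset.prod_congr rfl fun j _ => by ring
  have h2 : (∏ i : Fin l, (c * x - c * b i * τ⁻¹))
      = c ^ l * ∏ i : Fin l, (x - b i * τ⁻¹) := by
    rw [show (c : ℂ) ^ l = ∏ _i : Fin l, c by simp, ← Finset.prod_mul_distrib]
    exact Finset.prod_congr rfl fun i _ => by ring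
  rw [h1, h2, fP_smul, gP_smul]
  have hL : (((l : ℤ) - n + lam - 1).toNat - 1) = l - n + lam - 2 := by omega
  rcases Nat.lt_or_ge lam 2 with h2' | h2'
  · interval_cases lam
    have hg0 : ∀ y : ℂ, gP τ 1 y a = 0 := by intro y; simp [gP]
    rw [hg0, hL, show c ^ (l + 1 - 2) = c ^ n * c ^ (l - n + 1 - 2) by
      rw [← pow_add]; congr 1; omega]
    ring
  · rw [hL]
    calc c ^ n * (∏ j : Fin n, (x - a j * τ)) *
          (c ^ (l - n + lam - 2) * fP τ lam x a b) +
        τ ^ (2 * (l - n + lam - 1)) * (c ^ l * ∏ i : Fin l, (x - b i * τ⁻¹)) *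
          (c ^ (lam - 2) * gP τ lam x a)
        = (c ^ n * c ^ (l - n + lam - 2)) *
            ((∏ j : Fin n, (x - a j * τ)) * fP τ lam x a b) +
          (c ^ l * c ^ (lam - 2)) *
            (τ ^ (2 * (l - n + lam - 1)) * (∏ i : Fin l, (x - b i * τ⁻¹)) *
              gP τ lam x a) := by ring
      _ = _ := by
        rw [← pow_add, ← pow_add, show n + (l - n + lam - 2) = l + lam - 2 by omega,
          show l + (lam - 2) = l + lam - 2 by omega]
        ring

end Aux

/-- `Δ^{(nl)}` is homogeneous of degree `n(l−1) + n(n−1)/2`,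
antisymmetric in the `x`'s, and symmetric in the `a`'s and `b`'s separately. -/
theorem stmt_15 (q : ℂ) (hq0 : 0 < ‖q‖) (hq1 : ‖q‖ < 1)
    (τ : ℂ) (hτ : τ = q⁻¹) (n l : ℕ) (hn : 1 ≤ n) (hnl : n < l) :
    (∀ (c : ℂ) (x a : Fin n → ℂ) (b : Fin l → ℂ),
      DeltaP τ (fun μ => c * x μ) (fun j => c * a j) (fun i => c * b i)
        = c ^ (n * (l - 1) + n * (n - 1) / 2) * DeltaP τ x a b)
    ∧ (∀ (x a : Fin n → ℂ) (b : Fin l → ℂ) (μ ν : Fin n), μ ≠ ν →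
      DeltaP τ (x ∘ Equiv.swap μ ν) a b = - DeltaP τ x a b)
    ∧ (∀ (x a : Fin n → ℂ) (b : Fin l → ℂ)
        (pa : Equiv.Perm (Fin n)) (pb : Equiv.Perm (Fin l)),
      DeltaP τ x (a ∘ pa) (b ∘ pb) = DeltaP τ x a b) := by
  refine ⟨?_, ?_, ?_⟩
  · intro c x a b
    unfold DeltaP
    have hM : (Matrix.of fun lam μ : Fin n =>
        AP τ ((lam : ℕ) + 1) (c * x μ) (fun j => c * a j) (fun i => c * b i))
        = Matrix.of fun lam μ : Fin n => c ^ (l - 1 + (lam : ℕ)) *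
            (Matrix.of fun lam μ : Fin n => AP τ ((lam : ℕ) + 1) (x μ) a b) lam μ := by
      ext lam μ
      simp only [Matrix.of_apply]
      rw [AP_smul c ((lam : ℕ) + 1) (by omega) hnl]
      congr 2
      omega
    rw [hM, Matrix.det_mul_column]
    congr 1
    rw [Finset.prod_pow_eq_pow_sum]
    congr 1
    rw [Fin.sum_univ_eq_sum_range (fun i => l - 1 + i), Finset.sum_add_distrib,
      Finset.sum_const, Finset.sum_range_id]
    simp [mul_comm]
  · intro x a b μ ν hμν
    unfold DeltaP
    have hM : (Matrix.of fun lam μ' : Fin n =>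
        AP τ ((lam : ℕ) + 1) ((x ∘ Equiv.swap μ ν) μ') a b)
        = (Matrix.of fun lam μ' : Fin n => AP τ ((lam : ℕ) + 1) (x μ') a b).submatrix
            id (Equiv.swap μ ν) := rfl
    rw [hM, Matrix.det_permute', Equiv.Perm.sign_swap hμν]
    simp
  · intro x a b pa pb
    unfold DeltaP
    congr 1
    ext lam μ
    exact AP_comp ((lam : ℕ) + 1) (x μ) a b pa pb
end
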